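/- Let L_x, L_y > 0, let q_1, …, q_N ∈ ℝ with Σ_{j=1}^N q_j = 0 (charge neutrality), and let r_1, …, r_N ∈ ℝ³ whose first two coordinates lie in (-L_x/2, L_x/2) × (-L_y/2, L_y/2). Fix i ∈ {1, …, N} and for n = (n₁, n₂) ∈ ℤ² \ {0} define F(n) = Σ_{j=1}^N q_j / |r_i - r_j + (n₁ L_x, n₂ L_y, 0)|. Then the family n ↦ |F(n) + F(-n)|, indexed by n ∈ ℤ² \ {0}, is summable. -/

import Mathlib

lemma key_bound {E : Type*} [NormedAddCommGroup E] [InnerProductSpace ℝ E]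
    (d v : E) (hv : 0 < ‖v‖) (hd : 2 * ‖d‖ ≤ ‖v‖) :
    |1/‖d+v‖ + 1/‖d-v‖ - 2/‖v‖| ≤ 8 * ‖d‖^2 / ‖v‖^3 := by
  set a := ‖d + v‖ with ha
  set b := ‖d - v‖ with hb
  set c := ‖v‖ with hc
  set D := ‖d‖^2 with hD
  set p : ℝ := inner ℝ d v with hp
  have ha2 : a^2 = D + 2*p + c^2 := by
    rw [ha, hD, hp, hc, @norm_add_sq_real]
  have hb2 : b^2 = D - 2*p + c^2 := by
    rw [hb, hD, hp, hc, @norm_sub_sq_real]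
  have hpb : |p| ≤ ‖d‖ * c := abs_real_inner_le_norm d v
  have hp2 : p^2 ≤ D * c^2 := by
    have := abs_nonneg p
    nlinarith [sq_abs p, norm_nonneg d]
  have hdn : 0 ≤ ‖d‖ := norm_nonneg d
  have hDc : 4 * D ≤ c^2 := by nlinarith
  have hD0 : 0 ≤ D := sq_nonneg _
  have hca : c ≤ a + ‖d‖ := by
    have := norm_sub_le (d + v) d
    rw [add_sub_cancel_left] at this
    linarith
  have hcb : c ≤ b + ‖d‖ := by
    have := norm_sub_le d (d - v)
    rw [sub_sub_cancel] at this
    linarith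
  have ha0 : 0 < a := by nlinarith
  have hb0 : 0 < b := by nlinarith
  -- ab ≥ c² - D
  have habsq : (c^2 - D)^2 ≤ (a*b)^2 := by nlinarith
  have hab : c^2 - D ≤ a*b := by nlinarith [mul_pos ha0 hb0]
  -- a + b ≥ 2c
  have hs : 2*c ≤ a + b := by nlinarith [sq_nonneg (a+b), mul_pos ha0 hb0]
  -- numerator bound
  have hnum : |b*c + a*c - 2*(a*b)| ≤ 2*D := by
    rw [abs_le]
    have h1 : 0 ≤ a^2 + b^2 - 2*(a*b) := by nlinarith [sq_nonneg (a-b)]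
    have h2 : 0 ≤ (a + b - 2*c)*c := mul_nonneg (by linarith) (by linarith)
    have h2' : (a + b - 2*c)*c = a*c + b*c - 2*c^2 := by ring
    have h3 : 0 ≤ (a + b - 2*c)*(a + b + c) := mul_nonneg (by linarith) (by linarith)
    have h3' : (a + b - 2*c)*(a + b + c) = a^2 + b^2 + 2*(a*b) - a*c - b*c - 2*c^2 := by ring
    rw [h2'] at h2
    rw [h3'] at h3
    constructor
    · linarith
    · linarith
  have ha12 : c/2 ≤ a := by linarith
  have hb12 : c/2 ≤ b := by linarith
  have habc : c^3/4 ≤ a*b*c := by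
    have h := mul_le_mul_of_nonneg_right (mul_le_mul ha12 hb12 (by linarith) ha0.le) hv.le
    calc c^3/4 = c/2*(c/2)*c := by ring
      _ ≤ a*b*c := h
  have heq : 1/a + 1/b - 2/c = (b*c + a*c - 2*(a*b))/(a*b*c) := by
    field_simp
  rw [heq, abs_div, abs_of_pos (by positivity : (0:ℝ) < a*b*c)]
  calc |b*c + a*c - 2*(a*b)| / (a*b*c) ≤ (2*D)/(c^3/4) := by
        apply div_le_div₀ (by positivity) hnum (by positivity) habc
    _ = 8*D/c^3 := by rw [div_div_eq_mul_div]; ring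

/-- The lattice translation vector `(n₁ L_x, n₂ L_y, 0) ∈ ℝ³`. -/
noncomputable def latticeVec (Lx Ly : ℝ) (n : ℤ × ℤ) : EuclideanSpace ℝ (Fin 3) :=
  (WithLp.equiv 2 (Fin 3 → ℝ)).symm ![(n.1 : ℝ) * Lx, (n.2 : ℝ) * Ly, 0]

/-- Convergence of the doubly periodic (quasi-2D) Coulomb lattice sum under charge
neutrality, in symmetrized form: the family
`n ↦ |F(n) + F(-n)|`, `n ∈ ℤ² \ {0}`, with
`F(n) = Σ_j q_j/|r_i - r_j + (n₁L_x, n₂L_y, 0)|`, is summable. -/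

lemma latticeVec_neg (Lx Ly : ℝ) (n : ℤ × ℤ) :
    latticeVec Lx Ly (-n) = -latticeVec Lx Ly n := by
  have : ∀ m : ℤ × ℤ, ∀ k, latticeVec Lx Ly m k = ![(m.1 : ℝ) * Lx, (m.2 : ℝ) * Ly, 0] k :=
    fun m k => rfl
  ext k
  rw [this, PiLp.neg_apply, this]
  fin_cases k <;> simp

lemma norm_latticeVec_sq (Lx Ly : ℝ) (n : ℤ × ℤ) :
    ‖latticeVec Lx Ly n‖^2 = ((n.1:ℝ)*Lx)^2 + ((n.2:ℝ)*Ly)^2 := by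
  rw [EuclideanSpace.norm_eq]
  rw [Real.sq_sqrt (by positivity)]
  have : ∀ k, latticeVec Lx Ly n k = ![(n.1 : ℝ) * Lx, (n.2 : ℝ) * Ly, 0] k := fun k => rfl
  simp only [this, Fin.sum_univ_three]
  simp only [Real.norm_eq_abs, Matrix.cons_val_zero, Matrix.cons_val_one, Matrix.head_cons,
    Matrix.cons_val_two, Matrix.tail_cons]
  rw [sq_abs, sq_abs]
  simp

lemma min_mul_norm_le (Lx Ly : ℝ) (hLx : 0 < Lx) (hLy : 0 < Ly) (n : ℤ × ℤ) :
    min Lx Ly * ‖(![n.1, n.2] : Fin 2 → ℤ)‖ ≤ ‖latticeVec Lx Ly n‖ := by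
  set m := min Lx Ly with hm
  have hm0 : 0 < m := lt_min hLx hLy
  have hT : ‖(![n.1, n.2] : Fin 2 → ℤ)‖ = ((max n.1.natAbs n.2.natAbs : ℕ) : ℝ) := by
    rw [EisensteinSeries.norm_eq_max_natAbs]; simp
  have hc1 : ((n.1.natAbs : ℕ) : ℝ)^2 = ((n.1 : ℝ))^2 := by
    rw [Nat.cast_natAbs, Int.cast_abs]; exact sq_abs _
  have hc2 : ((n.2.natAbs : ℕ) : ℝ)^2 = ((n.2 : ℝ))^2 := by
    rw [Nat.cast_natAbs, Int.cast_abs]; exact sq_abs _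
  have hsq := norm_latticeVec_sq Lx Ly n
  have hv0 : 0 ≤ ‖latticeVec Lx Ly n‖ := norm_nonneg _
  rw [hT]
  have key : ∀ A L' : ℝ, 0 ≤ A → m ≤ L' → (L' * A)^2 ≤ ‖latticeVec Lx Ly n‖^2 →
      m * A ≤ ‖latticeVec Lx Ly n‖ := by
    intro A L' hA hmL hsq'
    have h2 : (m * A)^2 ≤ ‖latticeVec Lx Ly n‖^2 := by
      have hmm : m^2 ≤ L'^2 := pow_le_pow_left₀ hm0.le hmL 2
      calc (m*A)^2 = m^2 * A^2 := by ring
        _ ≤ L'^2 * A^2 := mul_le_mul_of_nonneg_right hmm (by positivity)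
        _ = (L' * A)^2 := by ring
        _ ≤ _ := hsq'
    have h3 := Real.sqrt_le_sqrt h2
    rwa [Real.sqrt_sq (by positivity), Real.sqrt_sq hv0] at h3
  rcases le_total n.1.natAbs n.2.natAbs with h | h
  · rw [max_eq_right h]
    refine key _ Ly (by positivity) (min_le_right _ _) ?_
    have : (Ly * ((n.2.natAbs : ℕ) : ℝ))^2 = ((n.2:ℝ)*Ly)^2 := by
      rw [mul_pow, hc2]; ring
    rw [this, hsq]
    nlinarith [sq_nonneg ((n.1:ℝ)*Lx)]
  · rw [max_eq_left h]
    refine key _ Lx (by positivity) (min_le_left _ _) ?_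
    have : (Lx * ((n.1.natAbs : ℕ) : ℝ))^2 = ((n.1:ℝ)*Lx)^2 := by
      rw [mul_pow, hc1]; ring
    rw [this, hsq]
    nlinarith [sq_nonneg ((n.2:ℝ)*Ly)]

theorem quasi2d_lattice_sum_summable (Lx Ly : ℝ) (hLx : 0 < Lx) (hLy : 0 < Ly)
    (N : ℕ) (q : Fin N → ℝ) (hq : ∑ j, q j = 0)
    (r : Fin N → EuclideanSpace ℝ (Fin 3))
    (hx : ∀ j, r j 0 ∈ Set.Ioo (-(Lx / 2)) (Lx / 2))
    (hy : ∀ j, r j 1 ∈ Set.Ioo (-(Ly / 2)) (Ly / 2))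
    (i : Fin N) :
    Summable (fun n : {n : ℤ × ℤ // n ≠ 0} =>
      |(∑ j, q j / ‖r i - r j + latticeVec Lx Ly n.1‖) +
        (∑ j, q j / ‖r i - r j + latticeVec Lx Ly (-n.1)‖)|) := by
  classical
  have hm0 : 0 < min Lx Ly := lt_min hLx hLy
  set m := min Lx Ly with hmdef
  obtain ⟨R, hR⟩ : ∃ R : ℝ, ∀ j, ‖r i - r j‖ ≤ R := Finite.exists_le _
  have hR0 : 0 ≤ R := le_trans (norm_nonneg (r i - r i)) (hR i)
  set M := (∑ j, |q j|) * (8 * R^2) with hMdef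
  have hM0 : 0 ≤ M := by positivity
  set φ : {n : ℤ × ℤ // n ≠ 0} → (Fin 2 → ℤ) := fun n => ![n.1.1, n.1.2] with hφ
  have hφinj : Function.Injective φ := by
    intro a b h
    have h0 := congrFun h 0
    have h1 := congrFun h 1
    simp only [hφ, Matrix.cons_val_zero, Matrix.cons_val_one, Matrix.head_cons] at h0 h1
    exact Subtype.ext (Prod.ext_iff.mpr ⟨h0, h1⟩)
  set g : {n : ℤ × ℤ // n ≠ 0} → ℝ := fun n => (M / m^3) * ‖φ n‖ ^ (-(3:ℝ)) with hg
  have hgsum : Summable g :=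
    ((EisensteinSeries.summable_one_div_norm_rpow (by norm_num : (2:ℝ) < 3)).comp_injective
      hφinj).mul_left _
  apply Summable.of_norm_bounded_eventually hgsum
  set K := (2*R+1)/m with hKdef
  have hK0 : 0 < K := by positivity
  have hmain : ∀ n : {n : ℤ × ℤ // n ≠ 0}, K ≤ ‖φ n‖ →
      |(∑ j, q j / ‖r i - r j + latticeVec Lx Ly n.1‖) +
        (∑ j, q j / ‖r i - r j + latticeVec Lx Ly (-n.1)‖)| ≤ g n := by
    intro n hn
    set v := latticeVec Lx Ly n.1 with hv
    set T := ‖φ n‖ with hT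
    have hT0 : 0 < T := lt_of_lt_of_le hK0 hn
    have hvlb : m * T ≤ ‖v‖ := min_mul_norm_le Lx Ly hLx hLy n.1
    have hRv : 2*R + 1 ≤ ‖v‖ := by
      have h1 : m * K ≤ m * T := mul_le_mul_of_nonneg_left hn hm0.le
      have h2 : m * K = 2*R+1 := by
        rw [hKdef]; field_simp
      linarith
    have hv0 : 0 < ‖v‖ := by linarith
    have hneg : ∀ j : Fin N, r i - r j + latticeVec Lx Ly (-n.1) = (r i - r j) - v := by
      intro j
      rw [latticeVec_neg, ← hv]
      abel
    simp only [hneg]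
    have hsplit : (∑ j, q j / ‖r i - r j + v‖) + (∑ j, q j / ‖(r i - r j) - v‖)
        = ∑ j, q j * (1/‖r i - r j + v‖ + 1/‖(r i - r j) - v‖ - 2/‖v‖) := by
      have hzero : ∑ j, q j * (2/‖v‖) = 0 := by
        rw [← Finset.sum_mul, hq, zero_mul]
      have hre : ∑ j, q j * (1/‖r i - r j + v‖ + 1/‖(r i - r j) - v‖ - 2/‖v‖)
          = (∑ j, q j * (1/‖r i - r j + v‖)) + (∑ j, q j * (1/‖(r i - r j) - v‖))
            - ∑ j, q j * (2/‖v‖) := by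
        simp only [mul_add, mul_sub]
        rw [Finset.sum_sub_distrib, Finset.sum_add_distrib]
      rw [hre, hzero, sub_zero]
      simp only [mul_one_div]
    rw [hsplit]
    have hTneg : T ^ (-(3:ℝ)) = (T^3)⁻¹ := by
      rw [show (-(3:ℝ)) = -((3:ℕ):ℝ) by norm_num, Real.rpow_neg hT0.le, Real.rpow_natCast]
    calc |∑ j, q j * (1/‖r i - r j + v‖ + 1/‖(r i - r j) - v‖ - 2/‖v‖)|
        ≤ ∑ j, |q j * (1/‖r i - r j + v‖ + 1/‖(r i - r j) - v‖ - 2/‖v‖)| :=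
          Finset.abs_sum_le_sum_abs _ _
      _ ≤ ∑ j, |q j| * (8 * R^2 / ‖v‖^3) := by
          apply Finset.sum_le_sum
          intro j _
          rw [abs_mul]
          refine mul_le_mul_of_nonneg_left ?_ (abs_nonneg _)
          have hb := key_bound (r i - r j) v hv0 (by linarith [hR j])
          refine hb.trans ?_
          have hsq : ‖r i - r j‖^2 ≤ R^2 := pow_le_pow_left₀ (norm_nonneg _) (hR j) 2
          apply div_le_div_of_nonneg_right ?_ (by positivity)
          linarith
      _ = M / ‖v‖^3 := by
          rw [← Finset.sum_mul, hMdef]; ring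
      _ ≤ M / (m*T)^3 := by
          have hpow : (m*T)^3 ≤ ‖v‖^3 := pow_le_pow_left₀ (by positivity) hvlb 3
          apply div_le_div_of_nonneg_left hM0 (by positivity) hpow
      _ = g n := by
          rw [hg]
          simp only
          rw [← hT, hTneg, mul_pow, div_mul_eq_div_div, div_eq_mul_inv]
  rw [Filter.eventually_cofinite]
  set B : ℤ := ⌈K⌉ with hB
  have hfin : (Subtype.val ⁻¹' (Set.Icc ((-B, -B) : ℤ × ℤ) (B, B)) :
      Set {n : ℤ × ℤ // n ≠ 0}).Finite :=
    (Set.finite_Icc _ _).preimage Subtype.coe_injective.injOn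
  apply hfin.subset
  intro n hn
  simp only [Set.mem_setOf_eq] at hn
  simp only [Set.mem_preimage, Set.mem_Icc]
  by_contra hout
  apply hn
  rw [Real.norm_eq_abs, abs_abs]
  apply hmain n
  -- derive K ≤ ‖φ n‖ from hout
  have hcase : B < (n.1.1.natAbs : ℤ) ∨ B < (n.1.2.natAbs : ℤ) := by
    by_contra hc
    push_neg at hc
    have h1 : -B ≤ (n : ℤ × ℤ).1 := by omega
    have h2 : -B ≤ (n : ℤ × ℤ).2 := by omega
    have h3 : (n : ℤ × ℤ).1 ≤ B := by omega
    have h4 : (n : ℤ × ℤ).2 ≤ B := by omega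
    exact hout ⟨⟨h1, h2⟩, h3, h4⟩
  have hnormφ : ‖φ n‖ = ((max n.1.1.natAbs n.1.2.natAbs : ℕ) : ℝ) := by
    rw [hφ]
    simp only
    rw [EisensteinSeries.norm_eq_max_natAbs]
    simp
  have hceil : K ≤ (B : ℝ) := Int.le_ceil K
  rw [hnormφ, Nat.cast_max]
  have hc1 : ((n.1.1.natAbs : ℕ) : ℝ) = |((n.1.1 : ℤ) : ℝ)| := by
    rw [Nat.cast_natAbs, Int.cast_abs]
  have hc2 : ((n.1.2.natAbs : ℕ) : ℝ) = |((n.1.2 : ℤ) : ℝ)| := by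
    rw [Nat.cast_natAbs, Int.cast_abs]
  rcases hcase with h | h
  · have h' : (B : ℤ) < |n.1.1| := by rw [Int.abs_eq_natAbs]; exact h
    have h'' : (B : ℝ) < |((n.1.1 : ℤ) : ℝ)| := by exact_mod_cast h'
    rw [← hc1] at h''
    exact le_trans hceil (le_trans h''.le (le_max_left _ _))
  · have h' : (B : ℤ) < |n.1.2| := by rw [Int.abs_eq_natAbs]; exact h
    have h'' : (B : ℝ) < |((n.1.2 : ℤ) : ℝ)| := by exact_mod_cast h'
    rw [← hc2] at h''
    exact le_trans hceil (le_trans h''.le (le_max_right _ _))
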